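/- Let (𝓜, 𝓒) be a perfect duality pair over a commutative ring R. Then 𝓜 contains all projective R-modules, and in fact 𝓜 contains all flat R-modules; moreover, the class 𝓒 contains all injective R-modules. -/

import Mathlib

open CategoryTheory

universe w u

/-- The character module `M⁺ = Hom_ℤ(M, ℚ/ℤ)` of `M`, as an object of `ModuleCat R`
(with the `R`-action `(r • f) x = f (r • x)`). -/
noncomputable def charMod (R : Type u) [CommRing R] (M : ModuleCat.{u} R) : ModuleCat.{u} R :=
  ModuleCat.of R (CharacterModule M)

/-- `(𝓜, 𝓒)` is a duality pair over `R`: both classes are closed under isomorphism,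
`M ∈ 𝓜 ↔ M⁺ ∈ 𝓒`, and `𝓒` is closed under direct summands and finite direct sums. -/
structure IsDualityPair (R : Type u) [CommRing R]
    (Mc Cc : ModuleCat.{u} R → Prop) : Prop where
  isoClosed_fst : ∀ {A B : ModuleCat.{u} R}, (A ≅ B) → Mc A → Mc B
  isoClosed_snd : ∀ {A B : ModuleCat.{u} R}, (A ≅ B) → Cc A → Cc B
  char_mem_iff : ∀ M : ModuleCat.{u} R, Mc M ↔ Cc (charMod R M)
  summand_closed : ∀ A B : ModuleCat.{u} R, Cc (ModuleCat.of R (A × B)) → Cc A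
  finSum_closed : ∀ A B : ModuleCat.{u} R, Cc A → Cc B → Cc (ModuleCat.of R (A × B))

/-- A duality pair `(𝓜, 𝓒)` is perfect if `R ∈ 𝓜` and `𝓜` is closed under arbitrary
direct sums and under extensions. -/
structure IsPerfectDualityPair (R : Type u) [CommRing R]
    (Mc Cc : ModuleCat.{u} R → Prop) extends IsDualityPair R Mc Cc : Prop where
  self_mem : Mc (ModuleCat.of R R)
  directSum_closed : ∀ (ι : Type u) (A : ι → ModuleCat.{u} R),
    (∀ i, Mc (A i)) → Mc (ModuleCat.of R (DirectSum ι (fun i => A i)))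
  extension_closed : ∀ S : ShortComplex (ModuleCat.{u} R),
    S.ShortExact → Mc S.X₁ → Mc S.X₃ → Mc S.X₂


section aux

variable {R : Type u} [CommRing R]

/-- The evaluation map into the double character module, as an `R`-linear map. -/
noncomputable def evalChar (M : Type u) [AddCommGroup M] [Module R M] :
    M →ₗ[R] CharacterModule (CharacterModule M) where
  toFun a :=
    { toFun := fun c => c a
      map_zero' := rfl
      map_add' := fun c c' => rfl }
  map_add' a b := by ext c; exact map_add c a b
  map_smul' r a := by ext c; rfl

lemma evalChar_injective (M : Type u) [AddCommGroup M] [Module R M] :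
    Function.Injective (evalChar (R := R) M) := by
  intro a b hab
  rw [← sub_eq_zero]
  apply CharacterModule.eq_zero_of_character_apply
  intro c
  have := congrArg (fun f => f c) hab
  simpa [evalChar, sub_eq_zero, map_sub] using (congr(($hab) c) : c a = c b)

lemma dual_injective_of_surjective {A B : Type u} [AddCommGroup A] [Module R A]
    [AddCommGroup B] [Module R B] (f : A →ₗ[R] B) (hf : Function.Surjective f) :
    Function.Injective (CharacterModule.dual f) := by
  intro c c' hcc
  ext b
  obtain ⟨a, rfl⟩ := hf b
  exact congr(($hcc) a)

/-- Split mono gives a product decomposition. -/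
noncomputable def splitEquiv {A B : Type u} [AddCommGroup A] [Module R A]
    [AddCommGroup B] [Module R B] (f : A →ₗ[R] B) (r : B →ₗ[R] A)
    (h : ∀ x, r (f x) = x) : B ≃ₗ[R] A × (LinearMap.ker r) where
  toFun b := (r b, ⟨b - f (r b), by simp [LinearMap.mem_ker, h]⟩)
  invFun p := f p.1 + p.2.1
  left_inv b := by simp
  right_inv p := by
    ext
    · simp [h, p.2.2, LinearMap.mem_ker.mp p.2.2]
    · simp [h, LinearMap.mem_ker.mp p.2.2]
  map_add' x y := by ext <;> simp <;> abel
  map_smul' c x := by ext <;> simp [smul_sub]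

end aux

/-- If `(𝓜, 𝓒)` is a perfect duality pair over a commutative ring `R`, then `𝓜` contains
all projective `R`-modules, in fact all flat `R`-modules, and `𝓒` contains all injective
`R`-modules. -/
theorem perfect_duality_pair_contains_proj_flat_inj
    (R : Type u) [CommRing R] (Mc Cc : ModuleCat.{u} R → Prop)
    (h : IsPerfectDualityPair R Mc Cc) :
    (∀ P : ModuleCat.{u} R, Projective P → Mc P) ∧
    (∀ F : ModuleCat.{u} R, Module.Flat R F → Mc F) ∧
    (∀ I : ModuleCat.{u} R, Injective I → Cc I) := by
  -- free modules are in Mc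
  have hfree : ∀ ι : Type u, Mc (ModuleCat.of R (ι →₀ R)) := by
    intro ι
    classical
    have h1 := h.directSum_closed ι (fun _ => ModuleCat.of R R) (fun _ => h.self_mem)
    exact h.isoClosed_fst
      ((finsuppLEquivDirectSum R R ι).symm.toModuleIso) h1
  -- injective modules are in Cc
  have hinj : ∀ I : ModuleCat.{u} R, Injective I → Cc I := by
    intro I hI
    set ι : Type u := CharacterModule I with hι
    set p : (ι →₀ R) →ₗ[R] CharacterModule I :=
      Finsupp.linearCombination R id with hp
    have hps : Function.Surjective p :=
      Finsupp.linearCombination_surjective R Function.surjective_id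
    set emb : I →ₗ[R] CharacterModule (ι →₀ R) :=
      (CharacterModule.dual p) ∘ₗ evalChar (R := R) I with hemb
    have hembinj : Function.Injective emb :=
      (dual_injective_of_surjective p hps).comp (evalChar_injective I)
    let N : ModuleCat.{u} R := charMod R (ModuleCat.of R (ι →₀ R))
    let f : I ⟶ N := ModuleCat.ofHom emb
    haveI : Mono f := (ModuleCat.mono_iff_injective f).mpr hembinj
    let r : N ⟶ I := Injective.factorThru (𝟙 I) f
    have hr : f ≫ r = 𝟙 I := Injective.comp_factorThru (𝟙 I) f
    have hrx : ∀ x : I, r.hom (f.hom x) = x := by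
      intro x
      exact congr(($hr) x)
    have hCcN : Cc N := (h.char_mem_iff (ModuleCat.of R (ι →₀ R))).mp (hfree ι)
    have e : N ≃ₗ[R] (I × (LinearMap.ker r.hom)) :=
      splitEquiv f.hom r.hom hrx
    have : Cc (ModuleCat.of R (I × (LinearMap.ker r.hom))) :=
      h.isoClosed_snd e.toModuleIso hCcN
    exact h.summand_closed I (ModuleCat.of R (LinearMap.ker r.hom)) this
  -- flat modules are in Mc
  have hflat : ∀ F : ModuleCat.{u} R, Module.Flat R F → Mc F := by
    intro F hF
    have : Module.Injective R (CharacterModule F) :=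
      (Module.Flat.iff_characterModule_injective).mp hF
    have : Injective (charMod R F) :=
      Module.injective_object_of_injective_module R (CharacterModule F)
    exact (h.char_mem_iff F).mpr (hinj _ this)
  refine ⟨fun P hP => ?_, hflat, hinj⟩
  have : Module.Projective R P := (IsProjective.iff_projective (R := R) P).mpr hP
  exact hflat P (Module.Flat.of_projective (R := R) (M := P))
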